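/- For every ζ > 0, define Δ(ζ, x) = Im(φ_x(iζ)) − ζ. Then ∫_{−∞}^{∞} Δ(ζ, x) dx = π/2. -/

import Mathlib

noncomputable def upperSqrt (w : ℂ) : ℂ :=
  if 0 < (w ^ (1/2 : ℂ)).im then w ^ (1/2 : ℂ) else -(w ^ (1/2 : ℂ))

noncomputable def slitMap (x : ℝ) (z : ℂ) : ℂ :=
  (x : ℂ) + upperSqrt ((z - (x : ℂ)) ^ 2 - 1)

open MeasureTheory

open Filter Topology

/-! ### Auxiliary lemmas -/

lemma half_sq (w : ℂ) : (w ^ ((1:ℂ)/2)) ^ 2 = w := by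
  rw [show ((1:ℂ)/2) = ((2:ℕ):ℂ)⁻¹ by norm_num]
  exact_mod_cast Complex.cpow_nat_inv_pow w two_ne_zero

lemma upperSqrt_sq (w : ℂ) : (upperSqrt w) ^ 2 = w := by
  unfold upperSqrt
  split_ifs
  · exact half_sq w
  · rw [neg_pow]; simpa using half_sq w

lemma upperSqrt_im (w : ℂ) (hw : w.im ≠ 0 ∨ w.re < 0) :
    (upperSqrt w).im = Real.sqrt ((‖w‖ - w.re) / 2) := by
  have hsq := upperSqrt_sq w
  set c := upperSqrt w with hc
  set s := w ^ ((1:ℂ)/2) with hsdef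
  have hs2 : s ^ 2 = w := half_sq w
  have him : 0 < c.im := by
    have hs : s.im ≠ 0 := by
      intro h0
      have h1 : w.im = 2 * s.re * s.im := by
        rw [← hs2]; simp [pow_two, Complex.mul_im]; ring
      have h2 : w.re = s.re ^ 2 - s.im ^ 2 := by
        rw [← hs2]; simp [pow_two, Complex.mul_re]
      rcases hw with h | h
      · rw [h1, h0] at h; simp at h
      · rw [h2, h0] at h; nlinarith
    rw [hc]
    unfold upperSqrt
    rw [← hsdef]
    split_ifs with h
    · exact h
    · simp only [Complex.neg_im]
      rcases lt_trichotomy s.im 0 with h' | h' | h'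
      · linarith
      · exact absurd h' hs
      · exact absurd h' h
  have hre : w.re = c.re ^ 2 - c.im ^ 2 := by
    rw [← hsq]; simp [pow_two, Complex.mul_re]
  have habs : ‖w‖ = c.re ^ 2 + c.im ^ 2 := by
    rw [← hsq, norm_pow, Complex.sq_norm, Complex.normSq_apply]; ring
  have h3 : (‖w‖ - w.re) / 2 = c.im ^ 2 := by rw [hre, habs]; ring
  rw [h3, Real.sqrt_sq him.le]

/-! ### Real-variable quantities -/

noncomputable def uu (ζ x : ℝ) : ℝ := x^2 - ζ^2 - 1
noncomputable def RR (ζ x : ℝ) : ℝ := Real.sqrt ((uu ζ x)^2 + 4*ζ^2*x^2)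
noncomputable def tt (ζ x : ℝ) : ℝ := (RR ζ x - uu ζ x)/2 - ζ^2
noncomputable def vv (ζ x : ℝ) : ℝ := Real.sqrt (tt ζ x + ζ^2)
noncomputable def FF (ζ x : ℝ) : ℝ :=
  (vv ζ x - ζ)*x - (Real.sqrt (tt ζ x - (tt ζ x)^2) + Real.arcsin (Real.sqrt (tt ζ x)))/2

lemma RR_sq (ζ x : ℝ) : RR ζ x ^ 2 = uu ζ x ^ 2 + 4*ζ^2*x^2 :=
  Real.sq_sqrt (by positivity)

lemma RR_nonneg (ζ x : ℝ) : 0 ≤ RR ζ x := Real.sqrt_nonneg _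

lemma tt_pos (ζ : ℝ) (hζ : 0 < ζ) (x : ℝ) : 0 < tt ζ x := by
  have h := RR_sq ζ x
  have h0 := RR_nonneg ζ x
  have hB : RR ζ x ^ 2 = (uu ζ x + 2*ζ^2)^2 + 4*ζ^2 := by
    rw [h]; unfold uu; ring
  unfold tt
  nlinarith [sq_nonneg (RR ζ x + uu ζ x + 2*ζ^2), sq_nonneg (RR ζ x - uu ζ x - 2*ζ^2),
    mul_pos hζ hζ]

lemma tt_le_one (ζ : ℝ) (hζ : 0 < ζ) (x : ℝ) : tt ζ x ≤ 1 := by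
  have h := RR_sq ζ x
  have h0 := RR_nonneg ζ x
  have hB : (uu ζ x + 2*ζ^2 + 2)^2 - RR ζ x ^ 2 = 4*x^2 := by
    rw [h]; unfold uu; ring
  have hb : 0 < uu ζ x + 2*ζ^2 + 2 := by unfold uu; nlinarith
  unfold tt
  nlinarith [sq_nonneg x]

lemma tt_lt_one (ζ : ℝ) (hζ : 0 < ζ) (x : ℝ) (hx : x ≠ 0) : tt ζ x < 1 := by
  have h := RR_sq ζ x
  have h0 := RR_nonneg ζ x
  have hB : (uu ζ x + 2*ζ^2 + 2)^2 - RR ζ x ^ 2 = 4*x^2 := by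
    rw [h]; unfold uu; ring
  have hb : 0 < uu ζ x + 2*ζ^2 + 2 := by unfold uu; nlinarith
  have hx2 : 0 < x^2 := by positivity
  unfold tt
  nlinarith

lemma vv_sq (ζ : ℝ) (hζ : 0 < ζ) (x : ℝ) : vv ζ x ^ 2 = tt ζ x + ζ^2 :=
  Real.sq_sqrt (by nlinarith [tt_pos ζ hζ x])

lemma vv_ge (ζ : ℝ) (hζ : 0 < ζ) (x : ℝ) : ζ ≤ vv ζ x := by
  have := tt_pos ζ hζ x
  calc ζ = Real.sqrt (ζ^2) := (Real.sqrt_sq hζ.le).symm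
  _ ≤ vv ζ x := Real.sqrt_le_sqrt (by linarith)

lemma vv_pos (ζ : ℝ) (hζ : 0 < ζ) (x : ℝ) : 0 < vv ζ x := lt_of_lt_of_le hζ (vv_ge ζ hζ x)

lemma key (ζ : ℝ) (hζ : 0 < ζ) (x : ℝ) :
    x^2 * tt ζ x = vv ζ x ^ 2 * (1 - tt ζ x) := by
  have h := RR_sq ζ x
  rw [vv_sq ζ hζ x]
  unfold tt uu at *
  linear_combination h/4

lemma tt_bound (ζ : ℝ) (hζ : 0 < ζ) (x : ℝ) : tt ζ x * (1 + x^2) ≤ ζ^2 + 2 := by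
  have hk := key ζ hζ x
  have hv := vv_sq ζ hζ x
  have h1 := tt_le_one ζ hζ x
  have h0 := tt_pos ζ hζ x
  nlinarith

/-! ### The antiderivative -/

lemma FF_hasDeriv (ζ : ℝ) (hζ : 0 < ζ) (x : ℝ) (hx : 0 < x) :
    HasDerivAt (FF ζ) (vv ζ x - ζ) x := by
  have hT0 := tt_pos ζ hζ x
  have hT1 := tt_lt_one ζ hζ x hx.ne'
  have hV := vv_pos ζ hζ x
  have hRpos : 0 < RR ζ x := by
    have h := RR_sq ζ x
    have h0 := RR_nonneg ζ x
    nlinarith [sq_nonneg (uu ζ x), mul_pos hζ hζ, mul_pos hx hx]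
  have hx2 : HasDerivAt (fun y : ℝ => y^2) (2*x) x := by
    simpa using hasDerivAt_pow 2 x
  have hu : HasDerivAt (uu ζ) (2*x) x := by
    unfold uu
    simpa using (hx2.sub_const (ζ^2)).sub_const 1
  have hq : HasDerivAt (fun y => (uu ζ y)^2 + 4*ζ^2*y^2)
      (2 * uu ζ x * (2*x) + 4*ζ^2*(2*x)) x := by
    have h1 : HasDerivAt (fun y => (uu ζ y)^2) ((2:ℕ) * uu ζ x ^ 1 * (2*x)) x := hu.pow 2
    have h2 : HasDerivAt (fun y : ℝ => 4*ζ^2*y^2) (4*ζ^2*(2*x)) x := hx2.const_mul _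
    have h3 := h1.add h2
    simp only [Nat.cast_ofNat, pow_one] at h3
    exact h3
  have hqpos : (0:ℝ) < (uu ζ x)^2 + 4*ζ^2*x^2 := by positivity
  have hR : HasDerivAt (RR ζ)
      ((2 * uu ζ x * (2*x) + 4*ζ^2*(2*x)) / (2 * RR ζ x)) x := by
    unfold RR
    exact hq.sqrt hqpos.ne'
  set q' : ℝ := 2 * uu ζ x * (2*x) + 4*ζ^2*(2*x) with hq'def
  set t' : ℝ := (q' / (2 * RR ζ x) - 2*x)/2 with ht'def
  have ht : HasDerivAt (tt ζ) t' x := by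
    unfold tt
    exact ((hR.sub hu).div_const 2).sub_const (ζ^2)
  have hv : HasDerivAt (vv ζ) (t' / (2 * vv ζ x)) x := by
    unfold vv
    exact (ht.add_const (ζ^2)).sqrt (by nlinarith)
  have hts : HasDerivAt (fun y => Real.sqrt (tt ζ y)) (t' / (2 * Real.sqrt (tt ζ x))) x :=
    ht.sqrt hT0.ne'
  have hsT : Real.sqrt (tt ζ x) < 1 := by
    rw [show (1:ℝ) = Real.sqrt 1 by simp]
    exact Real.sqrt_lt_sqrt hT0.le hT1
  have hsTpos : 0 < Real.sqrt (tt ζ x) := Real.sqrt_pos.mpr hT0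
  have harc : HasDerivAt (fun y => Real.arcsin (Real.sqrt (tt ζ y)))
      ((1 / Real.sqrt (1 - Real.sqrt (tt ζ x)^2)) * (t' / (2 * Real.sqrt (tt ζ x)))) x :=
    by have h := (Real.hasDerivAt_arcsin (x := Real.sqrt (tt ζ x)) (ne_of_gt (by linarith)) hsT.ne).comp x hts; exact h
  have hTT : 0 < tt ζ x - (tt ζ x)^2 := by nlinarith
  have hd1 : HasDerivAt (fun y => Real.sqrt (tt ζ y - (tt ζ y)^2))
      ((t' - (2:ℕ) * tt ζ x ^ 1 * t') / (2 * Real.sqrt (tt ζ x - (tt ζ x)^2))) x :=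
    (ht.sub (ht.pow 2)).sqrt hTT.ne'
  have hF : HasDerivAt (FF ζ)
      ((t' / (2 * vv ζ x)) * x + (vv ζ x - ζ) * 1
        - ((t' - (2:ℕ) * tt ζ x ^ 1 * t') / (2 * Real.sqrt (tt ζ x - (tt ζ x)^2))
           + (1 / Real.sqrt (1 - Real.sqrt (tt ζ x)^2)) * (t' / (2 * Real.sqrt (tt ζ x))))/2) x := by
    unfold FF
    exact ((hv.sub_const ζ).mul (hasDerivAt_id x)).sub ((hd1.add harc).div_const 2)
  convert hF using 1
  set T := tt ζ x with hTdef
  set V := vv ζ x with hVdef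
  have hs2sq : Real.sqrt T ^ 2 = T := Real.sq_sqrt hT0.le
  rw [hs2sq]
  set s2 := Real.sqrt T with hs2def
  set c := Real.sqrt (1 - T) with hcdef
  have hcpos : 0 < c := Real.sqrt_pos.mpr (by linarith)
  have hcsq : c^2 = 1 - T := Real.sq_sqrt (by linarith)
  have hs1 : Real.sqrt (T - T^2) = s2 * c := by
    rw [show T - T^2 = T * (1-T) by ring, Real.sqrt_mul hT0.le]
  rw [hs1]
  have hs2pos : 0 < s2 := hsTpos
  have hk := key ζ hζ x
  rw [← hTdef, ← hVdef] at hk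
  have hkey2 : x * (s2 * c) = V * (1 - T) := by
    have h2 : (x * (s2*c))^2 = (V * (1-T))^2 := by
      linear_combination x^2*c^2*hs2sq + x^2*T*hcsq + (1-T)*hk
    have hl : 0 ≤ x * (s2*c) := by positivity
    have hr : 0 ≤ V * (1-T) := by nlinarith
    have h3 := congrArg Real.sqrt h2
    rwa [Real.sqrt_sq hl, Real.sqrt_sq hr] at h3
  clear_value T V s2 c t' q'
  clear hF hd1 harc hts hv ht hR hq hu hx2 hk hs1 hs2sq hcsq hTT hsT
  field_simp
  linear_combination (-2 * t') * hkey2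

/-! ### Limits -/

lemma tt_tendsto (ζ : ℝ) (hζ : 0 < ζ) : Tendsto (tt ζ) atTop (𝓝 0) := by
  have hb : Tendsto (fun x : ℝ => (ζ^2 + 2)/(1 + x^2)) atTop (𝓝 0) := by
    apply Tendsto.div_atTop tendsto_const_nhds
    exact tendsto_atTop_add_const_left _ _ (tendsto_pow_atTop two_ne_zero)
  refine tendsto_of_tendsto_of_tendsto_of_le_of_le tendsto_const_nhds hb
    (fun x => (tt_pos ζ hζ x).le) (fun x => ?_)
  rw [le_div_iff₀ (by positivity)]
  linarith [tt_bound ζ hζ x]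

lemma vx_tendsto (ζ : ℝ) (hζ : 0 < ζ) :
    Tendsto (fun x => (vv ζ x - ζ) * x) atTop (𝓝 0) := by
  have hb : Tendsto (fun x : ℝ => (ζ^2 + 2)/(2*ζ) * x⁻¹) atTop (𝓝 0) := by
    have := tendsto_inv_atTop_zero.const_mul ((ζ^2 + 2)/(2*ζ))
    rwa [mul_zero] at this
  refine tendsto_of_tendsto_of_tendsto_of_le_of_le' tendsto_const_nhds hb ?_ ?_
  · filter_upwards [eventually_ge_atTop (0:ℝ)] with x hx
    have := vv_ge ζ hζ x
    nlinarith
  · filter_upwards [eventually_ge_atTop (1:ℝ)] with x hx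
    have hx0 : (0:ℝ) < x := by linarith
    have e1 : (vv ζ x - ζ) * (2*ζ) ≤ tt ζ x := by
      nlinarith [vv_sq ζ hζ x, vv_ge ζ hζ x]
    have e2 : tt ζ x * x^2 ≤ ζ^2 + 2 := by
      nlinarith [tt_bound ζ hζ x, tt_pos ζ hζ x]
    rw [mul_comm ((ζ^2+2)/(2*ζ)) x⁻¹, inv_mul_eq_div, le_div_iff₀ hx0,
      le_div_iff₀ (by positivity : (0:ℝ) < 2*ζ)]
    nlinarith [mul_le_mul_of_nonneg_right e1 (sq_nonneg x)]

lemma FF_tendsto (ζ : ℝ) (hζ : 0 < ζ) : Tendsto (FF ζ) atTop (𝓝 0) := by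
  have ht0 := tt_tendsto ζ hζ
  have h1 : Tendsto (fun x => Real.sqrt (tt ζ x - (tt ζ x)^2)) atTop (𝓝 0) := by
    have : Tendsto (fun x => tt ζ x - (tt ζ x)^2) atTop (𝓝 0) := by
      simpa using ht0.sub (ht0.pow 2)
    simpa [Function.comp_def] using (Real.continuous_sqrt.tendsto 0).comp this
  have h2 : Tendsto (fun x => Real.arcsin (Real.sqrt (tt ζ x))) atTop (𝓝 0) := by
    have hs : Tendsto (fun x => Real.sqrt (tt ζ x)) atTop (𝓝 0) := by
      simpa [Function.comp_def] using (Real.continuous_sqrt.tendsto 0).comp ht0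
    simpa [Function.comp_def] using (Real.continuous_arcsin.tendsto 0).comp hs
  have := (vx_tendsto ζ hζ).sub ((h1.add h2).div_const 2)
  exact (by simpa using this : Tendsto (fun x => (vv ζ x - ζ) * x - (Real.sqrt (tt ζ x - tt ζ x ^ 2) + Real.arcsin (Real.sqrt (tt ζ x))) / 2) atTop (𝓝 0))

lemma FF_zero (ζ : ℝ) (hζ : 0 < ζ) : FF ζ 0 = -(Real.pi/4) := by
  have ht : tt ζ 0 = 1 := by
    unfold tt RR uu
    rw [show ((0:ℝ)^2 - ζ^2 - 1)^2 + 4*ζ^2*0^2 = (ζ^2+1)^2 by ring,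
      Real.sqrt_sq (by positivity)]
    ring
  unfold FF
  rw [ht]
  norm_num [Real.sqrt_one, Real.arcsin_one]
  ring

lemma FF_cont (ζ : ℝ) : Continuous (FF ζ) := by
  have hc : Continuous (tt ζ) := by unfold tt RR uu; fun_prop
  have hvc : Continuous (vv ζ) := Real.continuous_sqrt.comp (hc.add continuous_const)
  exact ((hvc.sub continuous_const).mul continuous_id).sub
    (((Real.continuous_sqrt.comp (hc.sub (hc.pow 2))).add
      (Real.continuous_arcsin.comp (Real.continuous_sqrt.comp hc))).div_const 2)

/-! ### Main theorem -/

theorem slitMap_integral_vertical_growth (ζ : ℝ) (hζ : 0 < ζ) :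
    (∫ x : ℝ, ((slitMap x (Complex.I * ζ)).im - ζ)) = Real.pi / 2 := by
  have hpt : ∀ x : ℝ, (slitMap x (Complex.I * ζ)).im - ζ = vv ζ x - ζ := by
    intro x
    have hre : ((Complex.I * ζ - x)^2 - 1).re = uu ζ x := by
      simp [pow_two, Complex.mul_re, Complex.mul_im, uu]
    have him : ((Complex.I * ζ - x)^2 - 1).im = -(2*ζ*x) := by
      simp [pow_two, Complex.mul_re, Complex.mul_im]
      ring
    have hcond : ((Complex.I * ζ - x)^2 - 1).im ≠ 0 ∨ ((Complex.I * ζ - x)^2 - 1).re < 0 := by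
      rcases eq_or_ne x 0 with h | h
      · right; rw [hre, h]; unfold uu; nlinarith
      · left; rw [him]; intro h0; apply h; simpa [hζ.ne'] using h0
    have habs : ‖(Complex.I * ζ - x)^2 - 1‖ = RR ζ x := by
      rw [Complex.norm_def, Complex.normSq_apply, hre, him]
      unfold RR
      congr 1
      ring
    have : (slitMap x (Complex.I * ζ)).im = (upperSqrt ((Complex.I * ζ - x)^2 - 1)).im := by
      unfold slitMap
      simp
    rw [this, upperSqrt_im _ hcond, habs, hre]
    have : (RR ζ x - uu ζ x) / 2 = tt ζ x + ζ^2 := by unfold tt; ring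
    rw [this]
    rfl
  have heven : ∀ x : ℝ, vv ζ x = vv ζ |x| := by
    intro x
    unfold vv tt RR uu
    rw [sq_abs]
  have hfun : (fun x : ℝ => (slitMap x (Complex.I * ζ)).im - ζ)
      = fun x : ℝ => (fun y => vv ζ y - ζ) |x| := by
    funext x
    simp only [hpt x, heven x]
  rw [hfun, integral_comp_abs (f := fun y => vv ζ y - ζ)]
  have hint : (∫ x in Set.Ioi (0:ℝ), (vv ζ x - ζ)) = 0 - FF ζ 0 :=
    integral_Ioi_of_hasDerivAt_of_nonneg ((FF_cont ζ).continuousWithinAt)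
      (fun x hx => FF_hasDeriv ζ hζ x hx)
      (fun x _ => by linarith [vv_ge ζ hζ x]) (FF_tendsto ζ hζ)
  rw [hint, FF_zero ζ hζ]
  ring
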